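/- In the slab setting, let q_x ∈ [0,1] satisfy q_x ≤ rₓ(q₁, q₂). Then there exist q₂′ ∈ [q₁, q₂] with rₓ(q₁, q₂′) = q_x and q₁′ ∈ [q₁, q₂] with rₓ(q₁′, q₂) = q_x. Moreover, for any such q₁′, q₂′ and any q_y ∈ [0,1], if (r_y(q₁, q₂′) − q_y)·(r_y(q₁′, q₂) − q_y) ≤ 0, then there exist q₁″, q₂″ ∈ [q₁, q₂] with q₁″ ≤ q₂″ such that rₓ(q₁″, q₂″) = q_x and r_y(q₁″, q₂″) = q_y. -/

import Mathlib

open MeasureTheory ProbabilityTheory Real Filter Topology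
open scoped ENNReal NNReal

/-- The standard normal cumulative distribution function Φ. -/
noncomputable def Phi (t : ℝ) : ℝ := (gaussianReal 0 1 (Set.Iic t)).toReal

/-- The inverse Φ⁻¹ of the standard normal CDF (meaningful on (0,1)). -/
noncomputable def PhiInv : ℝ → ℝ := Function.invFun Phi

/-- The Gaussian measure N(m, σ²I) on ℝ^d. -/
noncomputable def gaussianVec {d : ℕ} (m : Fin d → ℝ) (σ : ℝ) :
    Measure (Fin d → ℝ) :=
  Measure.pi fun i => gaussianReal (m i) (Real.toNNReal (σ ^ 2))

/-- Dot product on ℝ^d. -/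
def dotp {d : ℕ} (a b : Fin d → ℝ) : ℝ := ∑ i, a i * b i

/-- Euclidean (ℓ₂) norm on ℝ^d. -/
noncomputable def l2norm {d : ℕ} (a : Fin d → ℝ) : ℝ := Real.sqrt (∑ i, a i ^ 2)

/-- Φ⁻¹ extended to EReal with the conventions Φ⁻¹(0) = −∞, Φ⁻¹(1) = +∞. -/
noncomputable def PhiInvE (p : ℝ) : EReal :=
  if p ≤ 0 then ⊥ else if 1 ≤ p then ⊤ else ((PhiInv p : ℝ) : EReal)

/-- Φ extended to EReal with Φ(−∞) = 0 and Φ(+∞) = 1. -/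
noncomputable def PhiE (e : EReal) : ℝ :=
  if e = ⊥ then 0 else if e = ⊤ then 1 else Phi e.toReal

/-- The slab C(a,b) = {z : σ‖δ‖₂ Φ⁻¹(1−b) < δᵀ(z−x) ≤ σ‖δ‖₂ Φ⁻¹(1−a)},
with the conventions Φ⁻¹(0) = −∞ and Φ⁻¹(1) = +∞ (assuming σ‖δ‖₂ > 0, the
defining inequalities are stated for the normalized quantity δᵀ(z−x)/(σ‖δ‖₂)). -/
noncomputable def slab {d : ℕ} (σ : ℝ) (x δ : Fin d → ℝ) (a b : ℝ) :
    Set (Fin d → ℝ) :=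
  {z | PhiInvE (1 - b) < ((dotp δ (z - x) / (σ * l2norm δ) : ℝ) : EReal) ∧
      ((dotp δ (z - x) / (σ * l2norm δ) : ℝ) : EReal) ≤ PhiInvE (1 - a)}

lemma aux_tendsto_sub (x : ℝ) : Tendsto (fun n : ℕ => x - 1/(n+1)) atTop (𝓝 x) := by
  have h : Tendsto (fun n : ℕ => 1/((n:ℝ)+1)) atTop (𝓝 0) :=
    tendsto_one_div_add_atTop_nhds_zero_nat
  simpa using tendsto_const_nhds.sub h

lemma aux_tendsto_add (x : ℝ) : Tendsto (fun n : ℕ => x + 1/(n+1)) atTop (𝓝 x) := by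
  have h : Tendsto (fun n : ℕ => 1/((n:ℝ)+1)) atTop (𝓝 0) :=
    tendsto_one_div_add_atTop_nhds_zero_nat
  simpa using tendsto_const_nhds.add h

lemma aux_mono_sub (x : ℝ) : Monotone (fun n : ℕ => x - 1/(n+1)) := by
  intro a b hab
  have : 1/((b:ℝ)+1) ≤ 1/((a:ℝ)+1) := by
    apply one_div_le_one_div_of_le (by positivity)
    exact_mod_cast by omega
  simp only; linarith

lemma aux_anti_add (x : ℝ) : Antitone (fun n : ℕ => x + 1/(n+1)) := by
  intro a b hab
  have : 1/((b:ℝ)+1) ≤ 1/((a:ℝ)+1) := by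
    apply one_div_le_one_div_of_le (by positivity)
    exact_mod_cast by omega
  simp only; linarith

lemma aux_sub_lt (x : ℝ) (n : ℕ) : x - 1/(n+1) < x := by
  have : (0:ℝ) < 1/((n:ℝ)+1) := by positivity
  linarith

lemma aux_lt_add (x : ℝ) (n : ℕ) : x < x + 1/(n+1) := by
  have : (0:ℝ) < 1/((n:ℝ)+1) := by positivity
  linarith

/-- A monotone real function continuous along monotone sequences is continuous. -/
lemma monotone_continuous_of_seq {g : ℝ → ℝ} (hg : Monotone g)
    (hL : ∀ (x : ℝ) (v : ℕ → ℝ), Monotone v → (∀ n, v n ≤ x) →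
      Tendsto v atTop (𝓝 x) → Tendsto (fun n => g (v n)) atTop (𝓝 (g x)))
    (hR : ∀ (x : ℝ) (v : ℕ → ℝ), Antitone v → (∀ n, x ≤ v n) →
      Tendsto v atTop (𝓝 x) → Tendsto (fun n => g (v n)) atTop (𝓝 (g x))) :
    Continuous g := by
  rw [continuous_iff_continuousAt]
  intro x
  rw [continuousAt_iff_continuous_left_right]
  constructor
  · rw [← continuousWithinAt_Iio_iff_Iic]
    have h1 := hg.tendsto_nhdsLT x
    have key : sSup (g '' Set.Iio x) = g x := by
      set v : ℕ → ℝ := fun n => x - 1/(n+1) with hv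
      have h2 : Tendsto (fun n => g (v n)) atTop (𝓝 (g x)) :=
        hL x v (aux_mono_sub x) (fun n => (aux_sub_lt x n).le) (aux_tendsto_sub x)
      have h3 : Tendsto (fun n => g (v n)) atTop (𝓝 (sSup (g '' Set.Iio x))) :=
        h1.comp (tendsto_nhdsWithin_of_tendsto_nhds_of_eventually_within v
          (aux_tendsto_sub x) (Eventually.of_forall (fun n => aux_sub_lt x n)))
      exact tendsto_nhds_unique h3 h2
    show Tendsto g (𝓝[Set.Iio x] x) (𝓝 (g x))
    rw [← key]; exact h1
  · rw [← continuousWithinAt_Ioi_iff_Ici]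
    have h1 := hg.tendsto_nhdsGT x
    have key : sInf (g '' Set.Ioi x) = g x := by
      set v : ℕ → ℝ := fun n => x + 1/(n+1) with hv
      have h2 : Tendsto (fun n => g (v n)) atTop (𝓝 (g x)) :=
        hR x v (aux_anti_add x) (fun n => (aux_lt_add x n).le) (aux_tendsto_add x)
      have h3 : Tendsto (fun n => g (v n)) atTop (𝓝 (sInf (g '' Set.Ioi x))) :=
        h1.comp (tendsto_nhdsWithin_of_tendsto_nhds_of_eventually_within v
          (aux_tendsto_add x) (Eventually.of_forall (fun n => aux_lt_add x n)))
      exact tendsto_nhds_unique h3 h2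
    show Tendsto g (𝓝[Set.Ioi x] x) (𝓝 (g x))
    rw [← key]; exact h1

lemma gr_null {m : ℝ} {s : Set ℝ} (h : volume s = 0) : gaussianReal m 1 s = 0 :=
  (gaussianReal_absolutelyContinuous m one_ne_zero) h

lemma gr_ne_zero {m : ℝ} {s : Set ℝ} (h : volume s ≠ 0) : gaussianReal m 1 s ≠ 0 :=
  fun h0 => h ((gaussianReal_absolutelyContinuous' m one_ne_zero) h0)

lemma phi_mono : Monotone Phi := fun s t hst =>
  ENNReal.toReal_mono (measure_ne_top _ _) (measure_mono (Set.Iic_subset_Iic.mpr hst))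

lemma phi_nonneg (t : ℝ) : 0 ≤ Phi t := ENNReal.toReal_nonneg

lemma phi_le_one (t : ℝ) : Phi t ≤ 1 := by
  have h := prob_le_one (μ := gaussianReal 0 1) (s := Set.Iic t)
  calc Phi t ≤ (1 : ℝ≥0∞).toReal := ENNReal.toReal_mono ENNReal.one_ne_top h
  _ = 1 := by simp

lemma phi_strictMono : StrictMono Phi := by
  intro s t hst
  have hunion : Set.Iic s ∪ Set.Ioc s t = Set.Iic t := Set.Iic_union_Ioc_eq_Iic hst.le
  have hdisj : Disjoint (Set.Iic s) (Set.Ioc s t) :=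
    Set.disjoint_left.2 fun y hy hy2 => absurd hy2.1 (not_lt.2 hy)
  have hm : gaussianReal 0 1 (Set.Iic t)
      = gaussianReal 0 1 (Set.Iic s) + gaussianReal 0 1 (Set.Ioc s t) := by
    rw [← hunion, measure_union hdisj measurableSet_Ioc]
  have hpos : gaussianReal 0 1 (Set.Ioc s t) ≠ 0 := by
    apply gr_ne_zero
    rw [Real.volume_Ioc]
    exact (ENNReal.ofReal_pos.mpr (by linarith)).ne'
  unfold Phi
  rw [hm, ENNReal.toReal_add (measure_ne_top _ _) (measure_ne_top _ _)]
  have := ENNReal.toReal_pos hpos (measure_ne_top _ _)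
  linarith

lemma phi_pos (t : ℝ) : 0 < Phi t := by
  apply ENNReal.toReal_pos _ (measure_ne_top _ _)
  apply gr_ne_zero
  rw [Real.volume_Iic]
  exact ENNReal.top_ne_zero

lemma phi_lt_one (t : ℝ) : Phi t < 1 := by
  have hunion : Set.Iic t ∪ Set.Ioi t = Set.univ := Set.Iic_union_Ioi
  have hdisj : Disjoint (Set.Iic t) (Set.Ioi t) :=
    Set.disjoint_left.2 fun y hy hy2 => absurd (Set.mem_Ioi.mp hy2) (not_lt.2 hy)
  have hm : (1 : ℝ≥0∞) = gaussianReal 0 1 (Set.Iic t) + gaussianReal 0 1 (Set.Ioi t) := by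
    rw [← measure_univ (μ := gaussianReal 0 1), ← hunion, measure_union hdisj measurableSet_Ioi]
  have hpos : gaussianReal 0 1 (Set.Ioi t) ≠ 0 := by
    apply gr_ne_zero
    rw [Real.volume_Ioi]
    exact ENNReal.top_ne_zero
  have h1 : (1:ℝ) = Phi t + (gaussianReal 0 1 (Set.Ioi t)).toReal := by
    have := congrArg ENNReal.toReal hm
    rwa [ENNReal.toReal_add (measure_ne_top _ _) (measure_ne_top _ _), ENNReal.toReal_one] at this
  have := ENNReal.toReal_pos hpos (measure_ne_top _ _)
  linarith

lemma phi_cont : Continuous Phi := by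
  apply monotone_continuous_of_seq phi_mono
  · intro x v hmono hle htend
    have hsets : Monotone (fun n => Set.Iic (v n)) :=
      fun a b hab => Set.Iic_subset_Iic.mpr (hmono hab)
    have hten := tendsto_measure_iUnion_atTop (μ := gaussianReal 0 1) hsets
    have hsub1 : Set.Iio x ⊆ ⋃ n, Set.Iic (v n) := by
      intro y hy
      obtain ⟨n, hn⟩ := (htend.eventually_const_lt hy).exists
      exact Set.mem_iUnion.2 ⟨n, le_of_lt hn⟩
    have hsub2 : (⋃ n, Set.Iic (v n)) ⊆ Set.Iic x :=
      Set.iUnion_subset fun n => Set.Iic_subset_Iic.mpr (hle n)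
    have hiic_le : gaussianReal 0 1 (Set.Iic x) ≤ gaussianReal 0 1 (Set.Iio x) := by
      have hs : gaussianReal 0 1 {x} = 0 := gr_null Real.volume_singleton
      calc gaussianReal 0 1 (Set.Iic x) ≤ gaussianReal 0 1 (Set.Iio x ∪ {x}) := by
            apply measure_mono; rw [Set.Iio_union_right]
      _ ≤ gaussianReal 0 1 (Set.Iio x) + gaussianReal 0 1 {x} := measure_union_le _ _
      _ = gaussianReal 0 1 (Set.Iio x) := by rw [hs, add_zero]
    have hequnion : gaussianReal 0 1 (⋃ n, Set.Iic (v n)) = gaussianReal 0 1 (Set.Iic x) :=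
      le_antisymm (measure_mono hsub2) (le_trans hiic_le (measure_mono hsub1))
    rw [hequnion] at hten
    have := (ENNReal.tendsto_toReal (measure_ne_top _ _)).comp hten
    exact this
  · intro x v hanti hle htend
    have hsets : Antitone (fun n => Set.Iic (v n)) :=
      fun a b hab => Set.Iic_subset_Iic.mpr (hanti hab)
    have hten := tendsto_measure_iInter_atTop (μ := gaussianReal 0 1)
      (fun n => measurableSet_Iic.nullMeasurableSet) hsets ⟨0, measure_ne_top _ _⟩
    have hinter : (⋂ n, Set.Iic (v n)) = Set.Iic x := by
      apply le_antisymm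
      · intro y hy
        simp only [Set.mem_iInter, Set.mem_Iic] at hy ⊢
        exact ge_of_tendsto htend (Eventually.of_forall hy)
      · intro y hy
        simp only [Set.mem_iInter, Set.mem_Iic] at hy ⊢
        exact fun n => le_trans hy (hle n)
    rw [hinter] at hten
    exact (ENNReal.tendsto_toReal (measure_ne_top _ _)).comp hten

lemma phi_tendsto_atTop : Tendsto Phi atTop (𝓝 1) := by
  rw [tendsto_order]
  constructor
  · intro c hc
    have hsets : Monotone (fun n : ℕ => Set.Iic ((n:ℝ))) :=
      fun a b hab => Set.Iic_subset_Iic.mpr (by exact_mod_cast hab)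
    have hten := tendsto_measure_iUnion_atTop (μ := gaussianReal 0 1) hsets
    have huniv : (⋃ n : ℕ, Set.Iic ((n:ℝ))) = Set.univ := by
      ext y
      simp only [Set.mem_iUnion, Set.mem_Iic, Set.mem_univ, iff_true]
      obtain ⟨n, hn⟩ := exists_nat_ge y
      exact ⟨n, hn⟩
    rw [huniv, measure_univ] at hten
    have hten2 : Tendsto (fun n : ℕ => Phi n) atTop (𝓝 1) := by
      have := (ENNReal.tendsto_toReal ENNReal.one_ne_top).comp hten
      rw [ENNReal.toReal_one] at this; exact this
    obtain ⟨N, hN⟩ := (hten2.eventually_const_lt hc).exists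
    exact eventually_atTop.2 ⟨N, fun t ht => lt_of_lt_of_le hN (phi_mono ht)⟩
  · intro c hc
    exact Eventually.of_forall fun t => lt_of_le_of_lt (phi_le_one t) hc

lemma phi_tendsto_atBot : Tendsto Phi atBot (𝓝 0) := by
  rw [tendsto_order]
  constructor
  · intro c hc
    exact Eventually.of_forall fun t => lt_of_lt_of_le hc (phi_nonneg t)
  · intro c hc
    have hsets : Antitone (fun n : ℕ => Set.Iic (-(n:ℝ))) :=
      fun a b hab => Set.Iic_subset_Iic.mpr (by exact_mod_cast neg_le_neg (by exact_mod_cast hab))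
    have hten := tendsto_measure_iInter_atTop (μ := gaussianReal 0 1)
      (fun n => measurableSet_Iic.nullMeasurableSet) hsets ⟨0, measure_ne_top _ _⟩
    have hempty : (⋂ n : ℕ, Set.Iic (-(n:ℝ))) = ∅ := by
      ext y
      simp only [Set.mem_iInter, Set.mem_Iic, Set.mem_empty_iff_false, iff_false, not_forall,
        not_le]
      obtain ⟨n, hn⟩ := exists_nat_gt (-y)
      exact ⟨n, by linarith⟩
    rw [hempty, measure_empty] at hten
    have hten2 : Tendsto (fun n : ℕ => Phi (-(n:ℝ))) atTop (𝓝 0) := by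
      have := (ENNReal.tendsto_toReal ENNReal.zero_ne_top).comp hten
      rw [ENNReal.toReal_zero] at this; exact this
    obtain ⟨N, hN⟩ := (hten2.eventually_lt_const hc).exists
    exact eventually_atBot.2 ⟨-(N:ℝ), fun t ht => lt_of_le_of_lt (phi_mono ht) hN⟩

lemma phi_exists_eq {p : ℝ} (h0 : 0 < p) (h1 : p < 1) : ∃ t, Phi t = p := by
  obtain ⟨a, ha⟩ := (phi_tendsto_atBot.eventually_lt_const h0).exists
  obtain ⟨b, hb⟩ := (phi_tendsto_atTop.eventually_const_lt h1).exists
  have hab : a ≤ b := by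
    by_contra h
    exact absurd (phi_mono (le_of_not_ge h)) (not_le.2 (lt_trans ha hb))
  obtain ⟨t, _, ht⟩ := intermediate_value_Icc hab phi_cont.continuousOn ⟨ha.le, hb.le⟩
  exact ⟨t, ht⟩

lemma phi_phiInv {p : ℝ} (h0 : 0 < p) (h1 : p < 1) : Phi (PhiInv p) = p :=
  Function.invFun_eq (phi_exists_eq h0 h1)

lemma lt_phiInv_iff {p : ℝ} (h0 : 0 < p) (h1 : p < 1) {r : ℝ} : r < PhiInv p ↔ Phi r < p := by
  rw [← phi_phiInv h0 h1, phi_strictMono.lt_iff_lt, phi_phiInv h0 h1]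

lemma phiInv_lt_iff {p : ℝ} (h0 : 0 < p) (h1 : p < 1) {r : ℝ} : PhiInv p < r ↔ p < Phi r := by
  rw [← phi_phiInv h0 h1, phi_strictMono.lt_iff_lt, phi_phiInv h0 h1]

lemma phiInvE_of_le {p : ℝ} (hp : p ≤ 0) : PhiInvE p = ⊥ := if_pos hp

lemma phiInvE_of_ge {p : ℝ} (h0 : 0 < p) (h1 : 1 ≤ p) : PhiInvE p = ⊤ := by
  rw [PhiInvE, if_neg (not_le.2 h0), if_pos h1]

lemma phiInvE_of_mem {p : ℝ} (h0 : 0 < p) (h1 : p < 1) :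
    PhiInvE p = ((PhiInv p : ℝ) : EReal) := by
  rw [PhiInvE, if_neg (not_le.2 h0), if_neg (not_le.2 h1)]

lemma phiInvE_mono : Monotone PhiInvE := by
  intro p q hpq
  by_cases hp0 : p ≤ 0
  · rw [phiInvE_of_le hp0]; exact bot_le
  · push_neg at hp0
    have hq0 : 0 < q := lt_of_lt_of_le hp0 hpq
    by_cases hq1 : 1 ≤ q
    · rw [phiInvE_of_ge hq0 hq1]; exact le_top
    · push_neg at hq1
      have hp1 : p < 1 := lt_of_le_of_lt hpq hq1
      rw [phiInvE_of_mem hp0 hp1, phiInvE_of_mem hq0 hq1, EReal.coe_le_coe_iff]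
      by_contra h
      push_neg at h
      have := phi_strictMono h
      rw [phi_phiInv hq0 hq1, phi_phiInv hp0 hp1] at this
      exact absurd hpq (not_le.2 this)

lemma phiInvE_iSup (p : ℝ) (v : ℕ → ℝ) (hle : ∀ n, v n ≤ p)
    (htend : Tendsto v atTop (𝓝 p)) : ⨆ n, PhiInvE (v n) = PhiInvE p := by
  apply le_antisymm (iSup_le fun n => phiInvE_mono (hle n))
  by_cases hp0 : p ≤ 0
  · rw [phiInvE_of_le hp0]; exact bot_le
  push_neg at hp0
  have key : ∀ r : ℝ, Phi r < p → (r : EReal) < ⨆ n, PhiInvE (v n) := by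
    intro r hr
    obtain ⟨n, hn⟩ := (htend.eventually_const_lt hr).exists
    have h0n : 0 < v n := lt_trans (phi_pos r) hn
    have hlt : (r : EReal) < PhiInvE (v n) := by
      by_cases h1n : 1 ≤ v n
      · rw [phiInvE_of_ge h0n h1n]; exact EReal.coe_lt_top r
      · push_neg at h1n
        rw [phiInvE_of_mem h0n h1n, EReal.coe_lt_coe_iff]
        exact (lt_phiInv_iff h0n h1n).2 hn
    exact lt_of_lt_of_le hlt (le_iSup (fun n => PhiInvE (v n)) n)
  by_cases hp1 : 1 ≤ p
  · rw [phiInvE_of_ge hp0 hp1]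
    by_contra h
    push_neg at h
    obtain ⟨r, hr1, _⟩ := EReal.lt_iff_exists_real_btwn.1 h
    exact absurd (key r (lt_of_lt_of_le (phi_lt_one r) hp1)) (not_lt.2 hr1.le)
  · push_neg at hp1
    rw [phiInvE_of_mem hp0 hp1]
    by_contra h
    push_neg at h
    obtain ⟨r, hr1, hr2⟩ := EReal.lt_iff_exists_real_btwn.1 h
    rw [EReal.coe_lt_coe_iff] at hr2
    have hPhir : Phi r < p := by rwa [← lt_phiInv_iff hp0 hp1]
    exact absurd (key r hPhir) (not_lt.2 hr1.le)

lemma phiInvE_iInf (p : ℝ) (v : ℕ → ℝ) (hge : ∀ n, p ≤ v n)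
    (htend : Tendsto v atTop (𝓝 p)) : ⨅ n, PhiInvE (v n) = PhiInvE p := by
  apply le_antisymm _ (le_iInf fun n => phiInvE_mono (hge n))
  by_cases hp1 : 1 ≤ p
  · have hall : ∀ n, PhiInvE (v n) = ⊤ := fun n =>
      phiInvE_of_ge (lt_of_lt_of_le zero_lt_one (hp1.trans (hge n))) (hp1.trans (hge n))
    rw [phiInvE_of_ge (lt_of_lt_of_le zero_lt_one hp1) hp1]
    simp [hall]
  push_neg at hp1
  have key : ∀ r : ℝ, p < Phi r → (⨅ n, PhiInvE (v n)) < (r : EReal) := by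
    intro r hr
    obtain ⟨n, hn⟩ := (htend.eventually_lt_const hr).exists
    have hn1 : v n < 1 := lt_trans hn (phi_lt_one r)
    have hlt : PhiInvE (v n) < (r : EReal) := by
      by_cases h0n : v n ≤ 0
      · rw [phiInvE_of_le h0n]; exact EReal.bot_lt_coe r
      · push_neg at h0n
        rw [phiInvE_of_mem h0n hn1, EReal.coe_lt_coe_iff]
        exact (phiInv_lt_iff h0n hn1).2 hn
    exact lt_of_le_of_lt (iInf_le (fun n => PhiInvE (v n)) n) hlt
  by_cases hp0 : p ≤ 0
  · rw [phiInvE_of_le hp0]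
    by_contra h
    push_neg at h
    obtain ⟨r, _, hr2⟩ := EReal.lt_iff_exists_real_btwn.1 h
    exact absurd hr2 (not_lt.2 (key r (lt_of_le_of_lt hp0 (phi_pos r))).le)
  · push_neg at hp0
    rw [phiInvE_of_mem hp0 hp1]
    by_contra h
    push_neg at h
    obtain ⟨r, hr1, hr2⟩ := EReal.lt_iff_exists_real_btwn.1 h
    have : p < Phi r := (phiInv_lt_iff hp0 hp1).1 (EReal.coe_lt_coe_iff.1 hr1)
    exact absurd hr2 (not_lt.2 (key r this).le)

lemma grv_null {m : ℝ} {v : ℝ≥0} (hv : v ≠ 0) {s : Set ℝ} (h : volume s = 0) :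
    gaussianReal m v s = 0 := (gaussianReal_absolutelyContinuous m hv) h

lemma pi_ac {n : ℕ} (μ ν : Fin n → Measure ℝ) (hμ : ∀ i, IsProbabilityMeasure (μ i))
    (hν : ∀ i, IsProbabilityMeasure (ν i)) (h : ∀ i, μ i ≪ ν i) :
    Measure.pi μ ≪ Measure.pi ν := by
  induction n with
  | zero =>
    haveI := hμ; haveI := hν
    apply Measure.AbsolutelyContinuous.mk
    intro s _ hs
    rcases Set.eq_empty_or_nonempty s with rfl | hne
    · simp
    · exfalso
      haveI : Unique (Fin 0 → ℝ) := ⟨⟨fun i => i.elim0⟩, fun f => funext fun i => i.elim0⟩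
      have hsu : s = Set.univ := hne.eq_univ
      rw [hsu, measure_univ] at hs
      exact one_ne_zero hs
  | succ n ih =>
    haveI := hμ; haveI := hν
    set e := MeasurableEquiv.piFinSuccAbove (fun _ : Fin (n + 1) => ℝ) 0 with he
    have h1 := measurePreserving_piFinSuccAbove μ 0
    have h2 := measurePreserving_piFinSuccAbove ν 0
    have hrest := ih (fun j => μ (Fin.succAbove 0 j)) (fun j => ν (Fin.succAbove 0 j))
      (fun j => hμ _) (fun j => hν _) (fun j => h _)
    haveI : ∀ j, IsProbabilityMeasure ((fun j => ν (Fin.succAbove 0 j)) j) := fun j => hν _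
    have hprod := Measure.AbsolutelyContinuous.prod (h 0) hrest
    have e1 : Measure.map (⇑e.symm)
        ((μ 0).prod (Measure.pi fun j => μ (Fin.succAbove 0 j))) = Measure.pi μ :=
      (h1.symm e).map_eq
    have e2 : Measure.map (⇑e.symm)
        ((ν 0).prod (Measure.pi fun j => ν (Fin.succAbove 0 j))) = Measure.pi ν :=
      (h2.symm e).map_eq
    rw [← e1, ← e2]
    exact hprod.map e.symm.measurable

lemma gaussianVec_prob {d : ℕ} (m : Fin d → ℝ) (σ : ℝ) :
    IsProbabilityMeasure (gaussianVec m σ) := by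
  unfold gaussianVec; infer_instance

lemma gaussianVec_ac {d : ℕ} (a b : Fin d → ℝ) {σ : ℝ} (hσ : 0 < σ) :
    gaussianVec a σ ≪ gaussianVec b σ := by
  have hv : Real.toNNReal (σ ^ 2) ≠ 0 := (Real.toNNReal_pos.2 (pow_pos hσ 2)).ne'
  apply pi_ac _ _ (fun i => inferInstance) (fun i => inferInstance)
  intro i
  exact (gaussianReal_absolutelyContinuous _ hv).trans (gaussianReal_absolutelyContinuous' _ hv)

lemma gaussianVec_hyperplane_null {d : ℕ} (m : Fin d → ℝ) {σ : ℝ} (hσ : 0 < σ)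
    {δ : Fin d → ℝ} (hδ : δ ≠ 0) (r : ℝ) :
    gaussianVec m σ {z | ∑ i, δ i * z i = r} = 0 := by
  have hv : Real.toNNReal (σ ^ 2) ≠ 0 := (Real.toNNReal_pos.2 (pow_pos hσ 2)).ne'
  obtain ⟨i0, hi0⟩ := Function.ne_iff.1 hδ
  simp only [Pi.zero_apply] at hi0
  cases d with
  | zero => exact i0.elim0
  | succ n =>
    set v := Real.toNNReal (σ ^ 2) with hvdef
    set μ : Fin (n + 1) → Measure ℝ := fun i => gaussianReal (m i) v with hμdef
    have h1 := measurePreserving_piFinSuccAbove μ i0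
    set e := MeasurableEquiv.piFinSuccAbove (fun _ : Fin (n + 1) => ℝ) i0 with he
    set S : Set (ℝ × (Fin n → ℝ)) :=
      {p | δ i0 * p.1 + ∑ j, δ (Fin.succAbove i0 j) * p.2 j = r} with hS
    have hmeas : Measurable fun p : ℝ × (Fin n → ℝ) =>
        δ i0 * p.1 + ∑ j, δ (Fin.succAbove i0 j) * p.2 j := by
      apply Measurable.add
      · exact measurable_fst.const_mul _
      · exact Finset.measurable_sum _ fun j _ =>
          ((measurable_pi_apply j).comp measurable_snd).const_mul _
    have hSm : MeasurableSet S := hmeas (measurableSet_singleton r)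
    have hpre : {z : Fin (n + 1) → ℝ | ∑ i, δ i * z i = r} = ⇑e ⁻¹' S := by
      ext z
      simp only [Set.mem_setOf_eq, Set.mem_preimage, hS, he,
        MeasurableEquiv.piFinSuccAbove_apply]
      rw [Fin.sum_univ_succAbove (fun i => δ i * z i) i0]
      constructor <;> intro hh <;> convert hh using 2 <;> rfl
    show Measure.pi μ _ = 0
    rw [hpre, h1.measure_preimage hSm.nullMeasurableSet, Measure.prod_apply_symm hSm]
    have hsec : ∀ w : Fin n → ℝ, ((fun y => (y, w)) ⁻¹' S)
        = {(r - ∑ j, δ (Fin.succAbove i0 j) * w j) / δ i0} := by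
      intro w
      ext y
      simp only [Set.mem_preimage, hS, Set.mem_setOf_eq, Set.mem_singleton_iff]
      constructor
      · intro hh; field_simp; linarith
      · intro hh; rw [hh]; field_simp; ring
    have : ∀ w : Fin n → ℝ, (μ i0) ((fun y => (y, w)) ⁻¹' S) = 0 := by
      intro w
      rw [hsec w]
      exact grv_null hv Real.volume_singleton
    rw [lintegral_congr this, lintegral_zero]

lemma measurable_normalized {d : ℕ} (σ : ℝ) (x δ : Fin d → ℝ) :
    Measurable (fun z : Fin d → ℝ => dotp δ (z - x) / (σ * l2norm δ)) := by
  apply Measurable.div_const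
  unfold dotp
  apply Finset.measurable_sum
  intro i _
  have h1 : Measurable fun z : Fin d → ℝ => z i - x i :=
    (measurable_pi_apply i).sub measurable_const
  exact h1.const_mul (δ i)

lemma measurableSet_slab {d : ℕ} (σ : ℝ) (x δ : Fin d → ℝ) (a b : ℝ) :
    MeasurableSet (slab σ x δ a b) := by
  have hf := measurable_normalized σ x δ
  have hfe : Measurable fun z : Fin d → ℝ =>
      ((dotp δ (z - x) / (σ * l2norm δ) : ℝ) : EReal) := measurable_coe_real_ereal.comp hf
  unfold slab
  rw [Set.setOf_and]
  exact (hfe measurableSet_Ioi).inter (hfe measurableSet_Iic)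

lemma l2norm_pos {d : ℕ} {δ : Fin d → ℝ} (hδ : δ ≠ 0) : 0 < l2norm δ := by
  unfold l2norm
  apply Real.sqrt_pos.2
  obtain ⟨i, hi⟩ := Function.ne_iff.1 hδ
  simp only [Pi.zero_apply] at hi
  have hterm : 0 < δ i ^ 2 := by
    rcases lt_or_gt_of_ne hi with h | h
    · positivity
    · positivity
  calc (0:ℝ) < δ i ^ 2 := hterm
  _ ≤ ∑ j, δ j ^ 2 := Finset.single_le_sum (fun j _ => sq_nonneg (δ j)) (Finset.mem_univ i)

/-- membership in a slab, unfolded -/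
lemma mem_slab {d : ℕ} {σ : ℝ} {x δ : Fin d → ℝ} {a b : ℝ} {z : Fin d → ℝ} :
    z ∈ slab σ x δ a b ↔
      (PhiInvE (1 - b) < ((dotp δ (z - x) / (σ * l2norm δ) : ℝ) : EReal) ∧
        ((dotp δ (z - x) / (σ * l2norm δ) : ℝ) : EReal) ≤ PhiInvE (1 - a)) := Iff.rfl

lemma slab_self_empty {d : ℕ} (σ : ℝ) (x δ : Fin d → ℝ) (a : ℝ) : slab σ x δ a a = ∅ := by
  ext z
  rw [mem_slab]
  simp only [Set.mem_empty_iff_false, iff_false, not_and, not_le]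
  exact fun h => h

lemma slab_mono_right {d : ℕ} (σ : ℝ) (x δ : Fin d → ℝ) (a : ℝ) {t t' : ℝ} (h : t ≤ t') :
    slab σ x δ a t ⊆ slab σ x δ a t' := by
  intro z hz
  rw [mem_slab] at hz ⊢
  exact ⟨lt_of_le_of_lt (phiInvE_mono (by linarith)) hz.1, hz.2⟩

lemma slab_diff {d : ℕ} (σ : ℝ) (x δ : Fin d → ℝ) {lo a b : ℝ} (hq1a : lo ≤ a) (hab : a ≤ b) :
    slab σ x δ a b = slab σ x δ lo b \ slab σ x δ lo a := by
  have hUa : PhiInvE (1 - a) ≤ PhiInvE (1 - lo) := phiInvE_mono (by linarith)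
  ext z
  rw [Set.mem_diff, mem_slab, mem_slab, mem_slab]
  constructor
  · rintro ⟨h1, h2⟩
    exact ⟨⟨h1, le_trans h2 hUa⟩, fun hcon => absurd h2 (not_le.2 hcon.1)⟩
  · rintro ⟨⟨h1, h2⟩, h3⟩
    refine ⟨h1, ?_⟩
    by_contra h4
    exact h3 ⟨not_le.1 h4, h2⟩

lemma slab_iUnion {d : ℕ} (σ : ℝ) (x δ : Fin d → ℝ) (lo : ℝ) (v : ℕ → ℝ) (t : ℝ)
    (hle : ∀ n, v n ≤ t) (htend : Tendsto v atTop (𝓝 t)) :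
    (⋃ n, slab σ x δ lo (v n)) = slab σ x δ lo t := by
  have hinf : ⨅ n, PhiInvE (1 - v n) = PhiInvE (1 - t) :=
    phiInvE_iInf (1 - t) (fun n => 1 - v n) (fun n => by linarith [hle n])
      (by simpa using tendsto_const_nhds.sub htend)
  ext z
  simp only [Set.mem_iUnion, mem_slab]
  constructor
  · rintro ⟨n, h1, h2⟩
    exact ⟨lt_of_le_of_lt (hinf ▸ iInf_le (fun n => PhiInvE (1 - v n)) n) h1, h2⟩
  · rintro ⟨h1, h2⟩
    rw [← hinf] at h1
    obtain ⟨n, hn⟩ := iInf_lt_iff.1 h1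
    exact ⟨n, hn, h2⟩

lemma slab_iInter_subset {d : ℕ} (σ : ℝ) (x δ : Fin d → ℝ) (lo : ℝ) (v : ℕ → ℝ) (t : ℝ)
    (hge : ∀ n, t ≤ v n) (htend : Tendsto v atTop (𝓝 t)) :
    (⋂ n, slab σ x δ lo (v n)) ⊆ slab σ x δ lo t ∪
      {z | ((dotp δ (z - x) / (σ * l2norm δ) : ℝ) : EReal) = PhiInvE (1 - t)} := by
  have hsup : ⨆ n, PhiInvE (1 - v n) = PhiInvE (1 - t) :=
    phiInvE_iSup (1 - t) (fun n => 1 - v n) (fun n => by linarith [hge n])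
      (by simpa using tendsto_const_nhds.sub htend)
  intro z hz
  simp only [Set.mem_iInter, mem_slab] at hz
  have hFle : PhiInvE (1 - t) ≤ ((dotp δ (z - x) / (σ * l2norm δ) : ℝ) : EReal) := by
    rw [← hsup]
    exact iSup_le fun n => (hz n).1.le
  rcases eq_or_lt_of_le hFle with heq | hlt
  · right; exact heq.symm
  · left; rw [mem_slab]; exact ⟨hlt, (hz 0).2⟩

lemma subset_slab_iInter {d : ℕ} (σ : ℝ) (x δ : Fin d → ℝ) (lo : ℝ) (v : ℕ → ℝ) (t : ℝ)
    (hge : ∀ n, t ≤ v n) :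
    slab σ x δ lo t ⊆ ⋂ n, slab σ x δ lo (v n) := by
  intro z hz
  simp only [Set.mem_iInter]
  exact fun n => slab_mono_right σ x δ lo (hge n) hz

/-- level sets of the normalized linear functional are null -/
lemma level_null {d : ℕ} (m : Fin d → ℝ) {σ : ℝ} (hσ : 0 < σ) (x : Fin d → ℝ)
    {δ : Fin d → ℝ} (hδ : δ ≠ 0) (c : EReal) :
    gaussianVec m σ {z : Fin d → ℝ |
      ((dotp δ (z - x) / (σ * l2norm δ) : ℝ) : EReal) = c} = 0 := by
  have hC : σ * l2norm δ ≠ 0 := (mul_pos hσ (l2norm_pos hδ)).ne'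
  induction c using EReal.rec with
  | bot => simp [EReal.coe_ne_bot]
  | top => simp [EReal.coe_ne_top]
  | coe r =>
    have hset : {z : Fin d → ℝ | ((dotp δ (z - x) / (σ * l2norm δ) : ℝ) : EReal) = (r : EReal)}
        = {z : Fin d → ℝ | ∑ i, δ i * z i = r * (σ * l2norm δ) + dotp δ x} := by
      ext z
      simp only [Set.mem_setOf_eq, EReal.coe_eq_coe_iff]
      rw [div_eq_iff hC]
      unfold dotp
      constructor
      · intro h
        have : ∑ i, δ i * (z - x) i = ∑ i, δ i * z i - ∑ i, δ i * x i := by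
          rw [← Finset.sum_sub_distrib]
          congr 1; ext i
          simp [Pi.sub_apply, mul_sub]
        rw [this] at h; linarith
      · intro h
        have : ∑ i, δ i * (z - x) i = ∑ i, δ i * z i - ∑ i, δ i * x i := by
          rw [← Finset.sum_sub_distrib]
          congr 1; ext i
          simp [Pi.sub_apply, mul_sub]
        rw [this]; linarith
    rw [hset]
    exact gaussianVec_hyperplane_null m hσ hδ _

/-- Lemma 7 of the paper (intermediate-value construction in the slab setting):
if q_x ≤ rₓ(q₁,q₂) then there are q₂′, q₁′ ∈ [q₁,q₂] with rₓ(q₁,q₂′) = q_x and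
rₓ(q₁′,q₂) = q_x; moreover, for any such q₁′, q₂′ and any q_y, if
(r_y(q₁,q₂′) − q_y)·(r_y(q₁′,q₂) − q_y) ≤ 0 then there exist
q₁″ ≤ q₂″ in [q₁,q₂] with rₓ(q₁″,q₂″) = q_x and r_y(q₁″,q₂″) = q_y. -/
theorem slab_intermediate_value
    {d : ℕ} (hd : 1 ≤ d) (σ : ℝ) (hσ : 0 < σ)
    (x δ : Fin d → ℝ) (hδ : δ ≠ 0)
    (q1 q2 : ℝ) (hq1 : 0 ≤ q1) (hq12 : q1 < q2) (hq2 : q2 ≤ 1)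
    (n : ℕ) (e1 e2 : Fin n → ℝ)
    (he : ∀ i, q1 ≤ e1 i ∧ e1 i ≤ e2 i ∧ e2 i ≤ q2)
    (C' : Set (Fin d → ℝ))
    (hC' : C' = slab σ x δ q1 q2 \ ⋃ i, slab σ x δ (e1 i) (e2 i))
    (rX rY : ℝ → ℝ → ℝ)
    (hrX : ∀ a b, rX a b = (gaussianVec x σ (C' ∩ slab σ x δ a b)).toReal)
    (hrY : ∀ a b, rY a b = (gaussianVec (x + δ) σ (C' ∩ slab σ x δ a b)).toReal)
    (qx : ℝ) (hqx : qx ∈ Set.Icc (0 : ℝ) 1) (hqxle : qx ≤ rX q1 q2) :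
    (∃ q2' ∈ Set.Icc q1 q2, rX q1 q2' = qx) ∧
    (∃ q1' ∈ Set.Icc q1 q2, rX q1' q2 = qx) ∧
    (∀ q1' q2', q1' ∈ Set.Icc q1 q2 → q2' ∈ Set.Icc q1 q2 →
      rX q1 q2' = qx → rX q1' q2 = qx →
      ∀ qy ∈ Set.Icc (0 : ℝ) 1,
        (rY q1 q2' - qy) * (rY q1' q2 - qy) ≤ 0 →
        ∃ q1'' q2'', q1'' ∈ Set.Icc q1 q2 ∧ q2'' ∈ Set.Icc q1 q2 ∧
          q1'' ≤ q2'' ∧ rX q1'' q2'' = qx ∧ rY q1'' q2'' = qy) := by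
  haveI hPprob : IsProbabilityMeasure (gaussianVec x σ) := gaussianVec_prob x σ
  haveI hQprob : IsProbabilityMeasure (gaussianVec (x + δ) σ) := gaussianVec_prob (x + δ) σ
  have hQP : gaussianVec (x + δ) σ ≪ gaussianVec x σ := gaussianVec_ac _ _ hσ
  have hC'm : MeasurableSet C' := by
    rw [hC']
    exact (measurableSet_slab _ _ _ _ _).diff
      (MeasurableSet.iUnion fun i => measurableSet_slab _ _ _ _ _)
  set m : ℝ → ℝ := fun t => ((gaussianVec x σ) (C' ∩ slab σ x δ q1 t)).toReal with hmdef
  set mY : ℝ → ℝ := fun t => ((gaussianVec (x + δ) σ) (C' ∩ slab σ x δ q1 t)).toReal with hmYdef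
  -- generic monotonicity and continuity
  have key_mono : ∀ (μ : Measure (Fin d → ℝ)), IsProbabilityMeasure μ →
      Monotone (fun t => (μ (C' ∩ slab σ x δ q1 t)).toReal) := by
    intro μ hprob s t hst
    haveI := hprob
    exact ENNReal.toReal_mono (measure_ne_top _ _)
      (measure_mono (Set.inter_subset_inter_right _ (slab_mono_right σ x δ q1 hst)))
  have key_cont : ∀ (μ : Measure (Fin d → ℝ)), IsProbabilityMeasure μ →
      (∀ c : EReal, μ {z : Fin d → ℝ |
        ((dotp δ (z - x) / (σ * l2norm δ) : ℝ) : EReal) = c} = 0) →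
      Continuous (fun t => (μ (C' ∩ slab σ x δ q1 t)).toReal) := by
    intro μ hprob hlevel
    haveI := hprob
    apply monotone_continuous_of_seq (key_mono μ hprob)
    · intro t v hvm hvle hvt
      have hsets : Monotone (fun k => C' ∩ slab σ x δ q1 (v k)) := fun a b hab =>
        Set.inter_subset_inter_right _ (slab_mono_right σ x δ q1 (hvm hab))
      have hten := tendsto_measure_iUnion_atTop (μ := μ) hsets
      have hUeq : (⋃ k, C' ∩ slab σ x δ q1 (v k)) = C' ∩ slab σ x δ q1 t := by
        rw [← Set.inter_iUnion, slab_iUnion σ x δ q1 v t hvle hvt]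
      rw [hUeq] at hten
      exact (ENNReal.tendsto_toReal (measure_ne_top _ _)).comp hten
    · intro t v hva hvge hvt
      have hsets : Antitone (fun k => C' ∩ slab σ x δ q1 (v k)) := fun a b hab =>
        Set.inter_subset_inter_right _ (slab_mono_right σ x δ q1 (hva hab))
      have hten := tendsto_measure_iInter_atTop (μ := μ)
        (fun k => (hC'm.inter (measurableSet_slab _ _ _ _ _)).nullMeasurableSet) hsets
        ⟨0, measure_ne_top _ _⟩
      have hIeq : μ (⋂ k, C' ∩ slab σ x δ q1 (v k)) = μ (C' ∩ slab σ x δ q1 t) := by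
        apply le_antisymm
        · have hsub : (⋂ k, C' ∩ slab σ x δ q1 (v k)) ⊆ (C' ∩ slab σ x δ q1 t) ∪
              {z : Fin d → ℝ | ((dotp δ (z - x) / (σ * l2norm δ) : ℝ) : EReal)
                = PhiInvE (1 - t)} := by
            rw [← Set.inter_iInter]
            intro z hz
            rcases slab_iInter_subset σ x δ q1 v t hvge hvt hz.2 with h | h
            · exact Or.inl ⟨hz.1, h⟩
            · exact Or.inr h
          calc μ (⋂ k, C' ∩ slab σ x δ q1 (v k)) ≤ _ := measure_mono hsub
          _ ≤ μ (C' ∩ slab σ x δ q1 t) + μ {z : Fin d → ℝ |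
              ((dotp δ (z - x) / (σ * l2norm δ) : ℝ) : EReal) = PhiInvE (1 - t)} :=
            measure_union_le _ _
          _ = μ (C' ∩ slab σ x δ q1 t) := by rw [hlevel, add_zero]
        · apply measure_mono
          rw [← Set.inter_iInter]
          exact Set.inter_subset_inter_right _ (subset_slab_iInter σ x δ q1 v t hvge)
      rw [hIeq] at hten
      exact (ENNReal.tendsto_toReal (measure_ne_top _ _)).comp hten
  have hm_mono : Monotone m := key_mono (gaussianVec x σ) hPprob
  have hmY_mono : Monotone mY := key_mono (gaussianVec (x + δ) σ) hQprob
  have hm_cont : Continuous m :=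
    key_cont (gaussianVec x σ) hPprob (fun c => level_null x hσ x hδ c)
  have hmY_cont : Continuous mY :=
    key_cont (gaussianVec (x + δ) σ) hQprob (fun c => level_null (x + δ) hσ x hδ c)
  have hm_q1 : m q1 = 0 := by
    rw [hmdef]
    simp [slab_self_empty]
  -- difference formula
  have hdiff : ∀ (μ : Measure (Fin d → ℝ)), IsProbabilityMeasure μ →
      ∀ a b : ℝ, q1 ≤ a → a ≤ b →
      (μ (C' ∩ slab σ x δ a b)).toReal
        = (μ (C' ∩ slab σ x δ q1 b)).toReal - (μ (C' ∩ slab σ x δ q1 a)).toReal := by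
    intro μ hprob a b hq1a hab
    haveI := hprob
    have hset : C' ∩ slab σ x δ a b = (C' ∩ slab σ x δ q1 b) \ (C' ∩ slab σ x δ q1 a) := by
      rw [slab_diff σ x δ hq1a hab, Set.inter_diff_distrib_left]
    have hsub : C' ∩ slab σ x δ q1 a ⊆ C' ∩ slab σ x δ q1 b :=
      Set.inter_subset_inter_right _ (slab_mono_right σ x δ q1 hab)
    rw [hset, measure_diff hsub
      (hC'm.inter (measurableSet_slab _ _ _ _ _)).nullMeasurableSet (measure_ne_top _ _),
      ENNReal.toReal_sub_of_le (measure_mono hsub) (measure_ne_top _ _)]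
  have hrXm : ∀ a b : ℝ, q1 ≤ a → a ≤ b → rX a b = m b - m a := by
    intro a b hq1a hab
    rw [hrX, hdiff (gaussianVec x σ) hPprob a b hq1a hab]
  have hrYm : ∀ a b : ℝ, q1 ≤ a → a ≤ b → rY a b = mY b - mY a := by
    intro a b hq1a hab
    rw [hrY, hdiff (gaussianVec (x + δ) σ) hQprob a b hq1a hab]
  -- flatness transfer
  have hflat : ∀ a b : ℝ, q1 ≤ a → a ≤ b → m a = m b → mY a = mY b := by
    intro a b hq1a hab hmab
    have hsub : C' ∩ slab σ x δ q1 a ⊆ C' ∩ slab σ x δ q1 b :=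
      Set.inter_subset_inter_right _ (slab_mono_right σ x δ q1 hab)
    have hPeq : gaussianVec x σ (C' ∩ slab σ x δ q1 a)
        = gaussianVec x σ (C' ∩ slab σ x δ q1 b) :=
      (ENNReal.toReal_eq_toReal_iff' (measure_ne_top _ _) (measure_ne_top _ _)).1 hmab
    have hdiffzero : gaussianVec x σ
        ((C' ∩ slab σ x δ q1 b) \ (C' ∩ slab σ x δ q1 a)) = 0 := by
      rw [measure_diff hsub
        (hC'm.inter (measurableSet_slab _ _ _ _ _)).nullMeasurableSet (measure_ne_top _ _),
        ← hPeq, tsub_self]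
    have hQzero := hQP hdiffzero
    have hle1 : gaussianVec (x + δ) σ (C' ∩ slab σ x δ q1 b)
        ≤ gaussianVec (x + δ) σ (C' ∩ slab σ x δ q1 a) := by
      calc gaussianVec (x + δ) σ (C' ∩ slab σ x δ q1 b)
          ≤ gaussianVec (x + δ) σ ((C' ∩ slab σ x δ q1 a)
            ∪ ((C' ∩ slab σ x δ q1 b) \ (C' ∩ slab σ x δ q1 a))) := by
            apply measure_mono
            intro z hz
            by_cases h : z ∈ C' ∩ slab σ x δ q1 a
            · exact Or.inl h
            · exact Or.inr ⟨hz, h⟩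
      _ ≤ gaussianVec (x + δ) σ (C' ∩ slab σ x δ q1 a)
            + gaussianVec (x + δ) σ ((C' ∩ slab σ x δ q1 b) \ (C' ∩ slab σ x δ q1 a)) :=
            measure_union_le _ _
      _ = gaussianVec (x + δ) σ (C' ∩ slab σ x δ q1 a) := by rw [hQzero, add_zero]
    have hle2 := measure_mono (μ := gaussianVec (x + δ) σ) hsub
    rw [hmYdef]
    simp only
    rw [le_antisymm hle2 hle1]
  -- total mass bound
  have hMtotal : qx ≤ m q2 := by
    rw [hrXm q1 q2 le_rfl hq12.le, hm_q1, sub_zero] at hqxle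
    exact hqxle
  have hMq0 : 0 ≤ m q2 := by rw [← hm_q1]; exact hm_mono hq12.le
  refine ⟨?_, ?_, ?_⟩
  · -- existence of q2'
    obtain ⟨t, ht1, ht2⟩ := intermediate_value_Icc hq12.le hm_cont.continuousOn
      (Set.mem_Icc.2 ⟨hm_q1 ▸ hqx.1, hMtotal⟩)
    exact ⟨t, ht1, by rw [hrXm q1 t le_rfl ht1.1, ht2, hm_q1, sub_zero]⟩
  · -- existence of q1'
    have hgc : ContinuousOn (fun a => m q2 - m a) (Set.Icc q1 q2) :=
      (continuous_const.sub hm_cont).continuousOn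
    obtain ⟨t, ht1, ht2⟩ := intermediate_value_Icc' hq12.le hgc
      (Set.mem_Icc.2 ⟨show m q2 - m q2 ≤ qx by rw [sub_self]; exact hqx.1,
        show qx ≤ m q2 - m q1 by rw [hm_q1, sub_zero]; exact hMtotal⟩)
    exact ⟨t, ht1, by rw [hrXm t q2 ht1.1 ht1.2]; exact ht2⟩
  · -- main construction
    rintro q1' q2' hq1'mem hq2'mem hrX2' hrX1' qy hqy hprod
    have hm2' : m q2' = qx := by
      rw [hrXm q1 q2' le_rfl hq2'mem.1, hm_q1, sub_zero] at hrX2'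
      exact hrX2'
    have hm1' : m q1' = m q2 - qx := by
      rw [hrXm q1' q2 hq1'mem.1 hq1'mem.2] at hrX1'
      linarith
    set Mq := m q2 with hMqdef
    set cl : ℝ → ℝ := fun u => max 0 (min u Mq) with hcl
    have hcl_mono : Monotone cl := fun u v huv =>
      max_le_max (le_refl (0:ℝ)) (min_le_min huv (le_refl Mq))
    have hcl_cont : Continuous cl := continuous_const.max (continuous_id.min continuous_const)
    have hcl_mem : ∀ u, 0 ≤ cl u ∧ cl u ≤ Mq := fun u =>
      ⟨le_max_left _ _, max_le hMq0 (min_le_right _ _)⟩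
    have hcl_eq : ∀ u, 0 ≤ u → u ≤ Mq → cl u = u := by
      intro u h1 h2
      rw [hcl]
      simp only
      rw [min_eq_left h2, max_eq_right h1]
    set S : ℝ → Set ℝ := fun u => Set.Icc q1 q2 ∩ {t | m t ≤ u} with hS
    have hSne : ∀ u, 0 ≤ u → q1 ∈ S u := fun u hu =>
      ⟨⟨le_rfl, hq12.le⟩, by simp only [Set.mem_setOf_eq]; rw [hm_q1]; exact hu⟩
    have hSbdd : ∀ u, BddAbove (S u) := fun u => ⟨q2, fun t ht => ht.1.2⟩
    have hSclosed : ∀ u, IsClosed (S u) := fun u =>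
      isClosed_Icc.inter (isClosed_le hm_cont continuous_const)
    set sig : ℝ → ℝ := fun u => sSup (S (cl u)) with hsig
    have hsig_memS : ∀ u, sig u ∈ S (cl u) := fun u =>
      (hSclosed _).csSup_mem ⟨q1, hSne _ (hcl_mem u).1⟩ (hSbdd _)
    have hsig_Icc : ∀ u, sig u ∈ Set.Icc q1 q2 := fun u => (hsig_memS u).1
    have hsig_m : ∀ u, m (sig u) = cl u := by
      intro u
      rcases lt_or_ge (m (sig u)) (cl u) with hlt | hge
      · exfalso
        have hne : sig u < q2 := by
          rcases eq_or_lt_of_le (hsig_Icc u).2 with heq | h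
          · exfalso
            rw [heq] at hlt
            exact absurd (hcl_mem u).2 (not_le.2 hlt)
          · exact h
        have hopen : IsOpen {t | m t < cl u} := isOpen_lt hm_cont continuous_const
        obtain ⟨ε, hε, hball⟩ := Metric.isOpen_iff.1 hopen (sig u) hlt
        have htgt : sig u < min q2 (sig u + ε / 2) := lt_min hne (by linarith)
        have htmem : min q2 (sig u + ε / 2) ∈ S (cl u) := by
          refine ⟨⟨le_trans (hsig_Icc u).1 htgt.le, min_le_left _ _⟩, ?_⟩
          have hmb : min q2 (sig u + ε / 2) ∈ Metric.ball (sig u) ε := by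
            rw [Metric.mem_ball, Real.dist_eq, abs_lt]
            have h1 : min q2 (sig u + ε / 2) ≤ sig u + ε / 2 := min_le_right _ _
            constructor <;> [linarith [htgt]; linarith]
          show m (min q2 (sig u + ε / 2)) ≤ cl u
          exact le_of_lt (show m (min q2 (sig u + ε / 2)) < cl u from hball hmb)
        exact absurd (le_csSup (hSbdd _) htmem) (not_le.2 htgt)
      · exact le_antisymm (hsig_memS u).2 hge
    have hsig_mono : Monotone sig := by
      intro u v huv
      apply csSup_le_csSup (hSbdd _) ⟨q1, hSne _ (hcl_mem u).1⟩
      exact Set.inter_subset_inter_right _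
        (fun t ht => le_trans ht (hcl_mono huv))
    set ψ : ℝ → ℝ := fun u => mY (sig u) with hψ
    have hψ_mono : Monotone ψ := fun u v huv => hmY_mono (hsig_mono huv)
    have hψ_cont : Continuous ψ := by
      apply monotone_continuous_of_seq hψ_mono
      · intro u v hvm hvle hvt
        have hwm : Monotone (fun k => sig (v k)) := fun a b hab => hsig_mono (hvm hab)
        have hwb : BddAbove (Set.range (fun k => sig (v k))) :=
          ⟨sig u, by rintro _ ⟨k, rfl⟩; exact hsig_mono (hvle k)⟩
        have hwt := tendsto_atTop_ciSup hwm hwb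
        have hτle : (⨆ k, sig (v k)) ≤ sig u := ciSup_le fun k => hsig_mono (hvle k)
        have hτge : q1 ≤ ⨆ k, sig (v k) :=
          le_trans (hsig_Icc (v 0)).1 (le_ciSup hwb 0)
        have h1 : Tendsto (fun k => m (sig (v k))) atTop (𝓝 (m (⨆ k, sig (v k)))) :=
          (hm_cont.continuousAt.tendsto).comp hwt
        have h2 : Tendsto (fun k => m (sig (v k))) atTop (𝓝 (cl u)) := by
          simp only [hsig_m]
          exact (hcl_cont.continuousAt.tendsto).comp hvt
        have hmτ : m (⨆ k, sig (v k)) = cl u := tendsto_nhds_unique h1 h2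
        have hflat2 : mY (⨆ k, sig (v k)) = mY (sig u) :=
          hflat _ _ hτge hτle (by rw [hmτ, hsig_m u])
        have h3 : Tendsto (fun k => mY (sig (v k))) atTop (𝓝 (mY (⨆ k, sig (v k)))) :=
          (hmY_cont.continuousAt.tendsto).comp hwt
        rw [hflat2] at h3
        exact h3
      · intro u v hva hvge hvt
        have hwa : Antitone (fun k => sig (v k)) := fun a b hab => hsig_mono (hva hab)
        have hwb : BddBelow (Set.range (fun k => sig (v k))) :=
          ⟨sig u, by rintro _ ⟨k, rfl⟩; exact hsig_mono (hvge k)⟩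
        have hwt := tendsto_atTop_ciInf hwa hwb
        have hτge : sig u ≤ ⨅ k, sig (v k) := le_ciInf fun k => hsig_mono (hvge k)
        have h1 : Tendsto (fun k => m (sig (v k))) atTop (𝓝 (m (⨅ k, sig (v k)))) :=
          (hm_cont.continuousAt.tendsto).comp hwt
        have h2 : Tendsto (fun k => m (sig (v k))) atTop (𝓝 (cl u)) := by
          simp only [hsig_m]
          exact (hcl_cont.continuousAt.tendsto).comp hvt
        have hmτ : m (⨅ k, sig (v k)) = cl u := tendsto_nhds_unique h1 h2
        have hflat2 : mY (sig u) = mY (⨅ k, sig (v k)) :=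
          hflat _ _ (hsig_Icc u).1 hτge (by rw [hmτ, hsig_m u])
        have h3 : Tendsto (fun k => mY (sig (v k))) atTop (𝓝 (mY (⨅ k, sig (v k)))) :=
          (hmY_cont.continuousAt.tendsto).comp hwt
        rw [← hflat2] at h3
        exact h3
    have hψval : ∀ u t0, 0 ≤ u → u ≤ Mq → t0 ∈ Set.Icc q1 q2 → m t0 = u → ψ u = mY t0 := by
      intro u t0 hu0 huM ht0 hmt0
      have hcl' : cl u = u := hcl_eq u hu0 huM
      have ht0S : t0 ∈ S (cl u) := ⟨ht0, by simp only [Set.mem_setOf_eq]; rw [hmt0, hcl']⟩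
      have hle' : t0 ≤ sig u := le_csSup (hSbdd _) ht0S
      exact (hflat t0 (sig u) ht0.1 hle' (by rw [hmt0, hsig_m u, hcl'])).symm
    have hqxM : qx ≤ Mq := hMtotal
    have hG_cont : Continuous (fun u => ψ (u + qx) - ψ u) :=
      (hψ_cont.comp (continuous_id.add continuous_const)).sub hψ_cont
    have hG0 : ψ (0 + qx) - ψ 0 = rY q1 q2' := by
      have e1 : ψ qx = mY q2' := hψval qx q2' hqx.1 hqxM hq2'mem hm2'
      have e2 : ψ 0 = mY q1 := hψval 0 q1 le_rfl hMq0 ⟨le_rfl, hq12.le⟩ hm_q1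
      rw [zero_add, e1, e2, hrYm q1 q2' le_rfl hq2'mem.1]
    have hGM : ψ ((Mq - qx) + qx) - ψ (Mq - qx) = rY q1' q2 := by
      have e1 : ψ Mq = mY q2 := hψval Mq q2 hMq0 le_rfl ⟨hq12.le, le_rfl⟩ rfl
      have e2 : ψ (Mq - qx) = mY q1' :=
        hψval (Mq - qx) q1' (by linarith) (by linarith [hqx.1]) hq1'mem hm1'
      rw [sub_add_cancel, e1, e2, hrYm q1' q2 hq1'mem.1 hq1'mem.2]
    have h0M : (0 : ℝ) ≤ Mq - qx := by linarith
    rw [← hG0, ← hGM] at hprod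
    have hexists : ∃ u ∈ Set.Icc (0:ℝ) (Mq - qx), ψ (u + qx) - ψ u = qy := by
      rcases mul_nonpos_iff.1 hprod with ⟨h1, h2⟩ | ⟨h1, h2⟩
      · have hmem : qy ∈ Set.Icc (ψ ((Mq - qx) + qx) - ψ (Mq - qx)) (ψ (0 + qx) - ψ 0) :=
          ⟨by linarith, by linarith⟩
        obtain ⟨u, hu1, hu2⟩ := intermediate_value_Icc' h0M hG_cont.continuousOn hmem
        exact ⟨u, hu1, hu2⟩
      · have hmem : qy ∈ Set.Icc (ψ (0 + qx) - ψ 0) (ψ ((Mq - qx) + qx) - ψ (Mq - qx)) :=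
          ⟨by linarith, by linarith⟩
        obtain ⟨u, hu1, hu2⟩ := intermediate_value_Icc h0M hG_cont.continuousOn hmem
        exact ⟨u, hu1, hu2⟩
    obtain ⟨u, ⟨hu0, huM⟩, hGu⟩ := hexists
    have huq : u ≤ u + qx := by linarith [hqx.1]
    refine ⟨sig u, sig (u + qx), hsig_Icc u, hsig_Icc (u + qx), hsig_mono huq, ?_, ?_⟩
    · rw [hrXm (sig u) (sig (u + qx)) (hsig_Icc u).1 (hsig_mono huq),
        hsig_m, hsig_m, hcl_eq u hu0 (by linarith),
        hcl_eq (u + qx) (by linarith [hqx.1]) (by linarith)]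
      ring
    · rw [hrYm (sig u) (sig (u + qx)) (hsig_Icc u).1 (hsig_mono huq)]
      exact hGu
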